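/- For every sufficiently large m there exists a 103-regular bipartite multigraph K with vertex classes A₁ ∪ A₂ and B₁ ∪ B₂, where |A₁| = |B₁| = 2m and |A₂| = |B₂| = 5m, such that for every A₁′ ⊆ A₁ and B₁′ ⊆ B₁ with |A₁′| = |B₁′| ≥ m, there is a perfect matching in K between A₁′ ∪ A₂ and B₁′ ∪ B₂. -/

import Mathlib

open Finset

namespace St14


lemma sum_halves (N : ℕ) : ∀ K, (∑ j ∈ Finset.range K, N / 2 ^ (j+1)) + N / 2 ^ K ≤ N := by
  intro K
  induction K with
  | zero => simp
  | succ K ih =>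
    rw [Finset.sum_range_succ]
    have h2 : N / 2 ^ (K+1) = N / 2 ^ K / 2 := by
      rw [pow_succ, Nat.div_div_eq_div_mul]
    have h3 : N / 2 ^ K / 2 + N / 2 ^ K / 2 ≤ N / 2 ^ K := by omega
    omega

lemma two_pow_le_fact (j : ℕ) : 2 ^ j ≤ 2 * j.factorial := by
  induction j with
  | zero => simp
  | succ j ih =>
    match j, ih with
    | 0, _ => norm_num
    | (j+1), ih =>
      rw [pow_succ, Nat.factorial_succ]
      have h2 : 2 ≤ j + 1 + 1 := by omega
      calc 2 ^ (j+1) * 2 ≤ 2 * (j+1).factorial * 2 := by omega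
      _ = 2 * (2 * (j+1).factorial) := by ring
      _ ≤ 2 * ((j + 1 + 1) * (j+1).factorial) :=
          Nat.mul_le_mul_left _ (Nat.mul_le_mul_right _ h2)
lemma succ_pow_le (k : ℕ) : (k+1) ^ k ≤ 4 * k ^ k := by
  have hexp : (k+1) ^ k = ∑ j ∈ Finset.range (k+1), k ^ j * k.choose j := by
    have := add_pow (R := ℕ) k 1 k
    simpa using this
  have hterm : ∀ j ∈ Finset.range (k+1), k ^ j * k.choose j ≤ 2 * k ^ k / 2 ^ (k - j) := by
    intro j hj
    rw [Finset.mem_range] at hj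
    have hjk : j ≤ k := by omega
    rw [Nat.le_div_iff_mul_le (Nat.pow_pos (by norm_num))]
    have h1 : k.choose j * 2 ^ (k-j) ≤ 2 * k ^ (k-j) := by
      rw [← Nat.choose_symm hjk]
      have h2 : k.choose (k-j) * (k-j).factorial ≤ k ^ (k-j) := by
        rw [mul_comm, ← Nat.descFactorial_eq_factorial_mul_choose]
        exact Nat.descFactorial_le_pow _ _
      calc k.choose (k-j) * 2 ^ (k-j) ≤ k.choose (k-j) * (2 * (k-j).factorial) :=
            Nat.mul_le_mul_left _ (two_pow_le_fact _)
      _ = 2 * (k.choose (k-j) * (k-j).factorial) := by ring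
      _ ≤ 2 * k ^ (k-j) := Nat.mul_le_mul_left _ h2
    calc k ^ j * k.choose j * 2 ^ (k-j) = k ^ j * (k.choose j * 2 ^ (k-j)) := by ring
    _ ≤ k ^ j * (2 * k ^ (k-j)) := Nat.mul_le_mul_left _ h1
    _ = 2 * (k ^ j * k ^ (k-j)) := by ring
    _ = 2 * k ^ k := by rw [← pow_add, Nat.add_sub_cancel' hjk]
  calc (k+1) ^ k ≤ ∑ j ∈ Finset.range (k+1), 2 * k ^ k / 2 ^ (k - j) := by
        rw [hexp]; exact Finset.sum_le_sum hterm
  _ = ∑ j ∈ Finset.range (k+1), 2 * k ^ k / 2 ^ j := by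
        have h := Finset.sum_range_reflect (fun i => 2 * k ^ k / 2 ^ i) (k+1)
        simpa using h
  _ = (∑ j ∈ Finset.range k, 2 * k ^ k / 2 ^ (j+1)) + 2 * k ^ k / 2 ^ 0 := by
        rw [Finset.sum_range_succ']
  _ ≤ 2 * k ^ k + 2 * k ^ k := by
        have h := sum_halves (2 * k ^ k) k
        have h2 : (∑ j ∈ Finset.range k, 2 * k ^ k / 2 ^ (j+1)) ≤ 2 * k ^ k :=
          le_trans (Nat.le_add_right _ _) h
        simp only [pow_zero, Nat.div_one]
        omega
  _ = 4 * k ^ k := by ring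

lemma pow_self_le (x : ℕ) : x ^ x ≤ 4 ^ x * x.factorial := by
  induction x with
  | zero => simp
  | succ x ih =>
    calc (x+1) ^ (x+1) = (x+1) * (x+1) ^ x := by ring
    _ ≤ (x+1) * (4 * x ^ x) := Nat.mul_le_mul_left _ (succ_pow_le x)
    _ ≤ (x+1) * (4 * (4 ^ x * x.factorial)) := by
        have := Nat.mul_le_mul_left 4 ih
        exact Nat.mul_le_mul_left _ this
    _ = 4 ^ (x+1) * ((x+1) * x.factorial) := by ring
    _ = 4 ^ (x+1) * (x+1).factorial := by rw [Nat.factorial_succ]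

lemma sub_mul_le {x y n : ℕ} (hyn : y ≤ n) : (y - x) * n ≤ (n - x) * y := by
  rcases Nat.le_total x y with h | h
  · have h1 : (y - x) * n = y * n - x * n := by rw [Nat.sub_mul]
    have h2 : (n - x) * y = n * y - x * y := by rw [Nat.sub_mul]
    have h3 : x * y ≤ x * n := Nat.mul_le_mul_left _ hyn
    have h4 : y * n = n * y := mul_comm _ _
    omega
  · have : y - x = 0 := by omega
    simp [this]

lemma dF_ratio (n : ℕ) {y : ℕ} (hyn : y ≤ n) :
    ∀ x, y.descFactorial x * n ^ x ≤ n.descFactorial x * y ^ x := by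
  intro x
  induction x with
  | zero => simp
  | succ x ih =>
    rw [Nat.descFactorial_succ, Nat.descFactorial_succ, pow_succ, pow_succ]
    calc (y - x) * y.descFactorial x * (n ^ x * n)
        = ((y - x) * n) * (y.descFactorial x * n ^ x) := by ring
    _ ≤ ((n - x) * y) * (n.descFactorial x * y ^ x) :=
        Nat.mul_le_mul (sub_mul_le hyn) ih
    _ = (n - x) * n.descFactorial x * (y ^ x * y) := by ring



lemma choose_mul_fact_le (n k : ℕ) : n.choose k * k.factorial ≤ n ^ k := by
  rw [mul_comm, ← Nat.descFactorial_eq_factorial_mul_choose]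
  exact Nat.descFactorial_le_pow _ _

lemma key_ineq (n x : ℕ) (hx1 : 1 ≤ x) (hyn : 2*x ≤ n) (h5x : 5*x ≤ 2*n) :
    2^(2*x) * (2 * (n.choose x * (n.choose (2*x) *
      ((2*x).descFactorial x * (n - x).factorial)^83))) ≤ (n.factorial)^83 := by
  have hxn : x ≤ n := by omega
  have hnpos : 0 < n := by omega
  have pow_self_le2 : ∀ z : ℕ, z^z ≤ 2^(2*z) * z.factorial := by
    intro z
    have h := pow_self_le z
    calc z^z ≤ 4^z * z.factorial := h
    _ = 2^(2*z) * z.factorial := by rw [show (4:ℕ) = 2^2 by norm_num, ← pow_mul]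
  -- G7
  have G7 : 2 * 2^(169*x) ≤ 5^(80*x) := by
    have h1 : (2:ℕ) ≤ 2^x := by
      have : (2:ℕ)^1 ≤ 2^x := Nat.pow_le_pow_right (by norm_num) hx1
      simpa using this
    calc 2 * 2^(169*x) ≤ 2^x * 2^(169*x) := Nat.mul_le_mul_right _ h1
    _ = 2^(x + 169*x) := by rw [← pow_add]
    _ = 2^(170*x) := by rw [show x + 169*x = 170*x by ring]
    _ = (2^170)^x := by rw [← pow_mul]
    _ ≤ (5^80)^x := Nat.pow_le_pow_left (by norm_num) x
    _ = 5^(80*x) := by rw [← pow_mul]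
  -- G6
  have G6 : 2^(8*x) * 2 * 2^(81*x) * x^(80*x) ≤ n^(80*x) := by
    have h1 : (5*x)^(80*x) ≤ (2*n)^(80*x) := Nat.pow_le_pow_left h5x _
    have h2 : (2^(8*x) * 2 * 2^(81*x) * x^(80*x)) * 5^(80*x) ≤ n^(80*x) * 5^(80*x) := by
      calc (2^(8*x) * 2 * 2^(81*x) * x^(80*x)) * 5^(80*x)
          = 2^(8*x) * 2 * 2^(81*x) * (5*x)^(80*x) := by ring
      _ ≤ 2^(8*x) * 2 * 2^(81*x) * (2*n)^(80*x) := Nat.mul_le_mul_left _ h1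
      _ = (2 * 2^(169*x)) * n^(80*x) := by ring
      _ ≤ 5^(80*x) * n^(80*x) := Nat.mul_le_mul_right _ G7
      _ = n^(80*x) * 5^(80*x) := by ring
    exact Nat.le_of_mul_le_mul_right h2 (Nat.pow_pos (by norm_num))
  -- G4
  have G4 : (2^(2*x) * 2 * n^(3*x) * (2*x)^(83*x)) * 2^(6*x)
      ≤ n^(83*x) * (x^x * (2*x)^(2*x)) := by
    calc (2^(2*x) * 2 * n^(3*x) * (2*x)^(83*x)) * 2^(6*x)
        = (2^(8*x) * 2 * 2^(81*x) * x^(80*x)) * (n^(3*x) * ((2*x)^(2*x) * x^x)) := by ring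
    _ ≤ n^(80*x) * (n^(3*x) * ((2*x)^(2*x) * x^x)) := Nat.mul_le_mul_right _ G6
    _ = n^(83*x) * (x^x * (2*x)^(2*x)) := by ring
  -- G3
  have G3 : 2^(2*x) * 2 * n^(3*x) * (2*x)^(83*x) ≤ n^(83*x) * (x.factorial * (2*x).factorial) := by
    have hx4 : x^x * (2*x)^(2*x) ≤ 2^(6*x) * (x.factorial * (2*x).factorial) := by
      calc x^x * (2*x)^(2*x) ≤ (2^(2*x) * x.factorial) * (2^(2*(2*x)) * (2*x).factorial) :=
            Nat.mul_le_mul (pow_self_le2 x) (pow_self_le2 (2*x))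
      _ = 2^(6*x) * (x.factorial * (2*x).factorial) := by ring
    have h := le_trans G4 (Nat.mul_le_mul_left _ hx4)
    have h2 : (2^(2*x) * 2 * n^(3*x) * (2*x)^(83*x)) * 2^(6*x)
        ≤ (n^(83*x) * (x.factorial * (2*x).factorial)) * 2^(6*x) := by
      calc (2^(2*x) * 2 * n^(3*x) * (2*x)^(83*x)) * 2^(6*x)
          ≤ n^(83*x) * (2^(6*x) * (x.factorial * (2*x).factorial)) := h
      _ = (n^(83*x) * (x.factorial * (2*x).factorial)) * 2^(6*x) := by ring
    exact Nat.le_of_mul_le_mul_right h2 (Nat.pow_pos (by norm_num))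
  -- G2
  have G2 : 2^(2*x) * 2 * (n.choose x) * (n.choose (2*x)) * (2*x)^(83*x) ≤ n^(83*x) := by
    have hfpos : 0 < x.factorial * (2*x).factorial :=
      Nat.mul_pos (Nat.factorial_pos _) (Nat.factorial_pos _)
    have h2 : (2^(2*x) * 2 * (n.choose x) * (n.choose (2*x)) * (2*x)^(83*x)) *
        (x.factorial * (2*x).factorial) ≤ n^(83*x) * (x.factorial * (2*x).factorial) := by
      calc (2^(2*x) * 2 * (n.choose x) * (n.choose (2*x)) * (2*x)^(83*x)) *
          (x.factorial * (2*x).factorial)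
          = (2^(2*x) * 2 * (2*x)^(83*x)) * ((n.choose x * x.factorial) *
            (n.choose (2*x) * (2*x).factorial)) := by ring
      _ ≤ (2^(2*x) * 2 * (2*x)^(83*x)) * (n^x * n^(2*x)) :=
          Nat.mul_le_mul_left _ (Nat.mul_le_mul (choose_mul_fact_le _ _) (choose_mul_fact_le _ _))
      _ = 2^(2*x) * 2 * n^(3*x) * (2*x)^(83*x) := by ring
      _ ≤ n^(83*x) * (x.factorial * (2*x).factorial) := G3
    exact Nat.le_of_mul_le_mul_right h2 hfpos
  -- G1
  have G1 : 2^(2*x) * 2 * (n.choose x) * (n.choose (2*x)) * ((2*x).descFactorial x)^83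
      ≤ (n.descFactorial x)^83 := by
    have hr := dF_ratio n hyn x
    have hr83 : ((2*x).descFactorial x)^83 * n^(83*x) ≤ (n.descFactorial x)^83 * (2*x)^(83*x) := by
      have := Nat.pow_le_pow_left hr 83
      calc ((2*x).descFactorial x)^83 * n^(83*x)
          = ((2*x).descFactorial x * n^x)^83 := by ring
      _ ≤ (n.descFactorial x * (2*x)^x)^83 := this
      _ = (n.descFactorial x)^83 * (2*x)^(83*x) := by ring
    have h2 : (2^(2*x) * 2 * (n.choose x) * (n.choose (2*x)) * ((2*x).descFactorial x)^83) * n^(83*x)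
        ≤ ((n.descFactorial x)^83) * n^(83*x) := by
      calc (2^(2*x) * 2 * (n.choose x) * (n.choose (2*x)) * ((2*x).descFactorial x)^83) * n^(83*x)
          = (2^(2*x) * 2 * (n.choose x) * (n.choose (2*x))) *
            (((2*x).descFactorial x)^83 * n^(83*x)) := by ring
      _ ≤ (2^(2*x) * 2 * (n.choose x) * (n.choose (2*x))) *
            ((n.descFactorial x)^83 * (2*x)^(83*x)) := Nat.mul_le_mul_left _ hr83
      _ = (2^(2*x) * 2 * (n.choose x) * (n.choose (2*x)) * (2*x)^(83*x)) *
            (n.descFactorial x)^83 := by ring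
      _ ≤ n^(83*x) * (n.descFactorial x)^83 := Nat.mul_le_mul_right _ G2
      _ = ((n.descFactorial x)^83) * n^(83*x) := by ring
    exact Nat.le_of_mul_le_mul_right h2 (Nat.pow_pos hnpos)
  -- final
  have hfact : (n - x).factorial * n.descFactorial x = n.factorial :=
    Nat.factorial_mul_descFactorial hxn
  calc 2^(2*x) * (2 * (n.choose x * (n.choose (2*x) *
        ((2*x).descFactorial x * (n - x).factorial)^83)))
      = (2^(2*x) * 2 * (n.choose x) * (n.choose (2*x)) * ((2*x).descFactorial x)^83) *
        ((n - x).factorial)^83 := by ring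
  _ ≤ (n.descFactorial x)^83 * ((n - x).factorial)^83 := Nat.mul_le_mul_right _ G1
  _ = ((n - x).factorial * n.descFactorial x)^83 := by ring
  _ = (n.factorial)^83 := by rw [hfact]



variable {W : Type*} [Fintype W] [DecidableEq W]

/-- Count of permutations mapping `X` into `Y`. -/
lemma perm_count (X Y : Finset W) :
    (Finset.univ.filter (fun π : Equiv.Perm W => ∀ v ∈ X, π v ∈ Y)).card ≤
      (Y.card).descFactorial X.card * ((Finset.univ \ X).card).factorial := by
  classical
  set C1 : Finset W := Finset.univ \ X with hC1
  -- image finset of an embedding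
  set img : (↥X ↪ ↥Y) → Finset W := fun f => X.attach.image (fun v => ((f v : ↥Y) : W)) with himg
  have himgcard : ∀ f, (img f).card = X.card := by
    intro f
    rw [himg]
    rw [Finset.card_image_of_injective _ (by
      intro a b hab
      exact (Function.Embedding.injective f) (Subtype.ext hab))]
    exact Finset.card_attach
  have hcard : ∀ f : ↥X ↪ ↥Y, (Finset.univ \ img f).card = C1.card := by
    intro f
    rw [Finset.card_univ_diff, Finset.card_univ_diff, himgcard]
  have hmemimg : ∀ (f : ↥X ↪ ↥Y) (w : W), w ∈ img f ↔ ∃ u : ↥X, ((f u : ↥Y) : W) = w := by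
    intro f w
    simp [himg]
  -- the subtype
  have hsub : (Finset.univ.filter (fun π : Equiv.Perm W => ∀ v ∈ X, π v ∈ Y)).card
      = Fintype.card {π : Equiv.Perm W // ∀ v ∈ X, π v ∈ Y} := by
    rw [Fintype.card_subtype]
  rw [hsub]
  have hbound : Fintype.card {π : Equiv.Perm W // ∀ v ∈ X, π v ∈ Y}
      ≤ Fintype.card ((↥X ↪ ↥Y) × Equiv.Perm (Fin C1.card)) := by
    -- construct injection
    have hfemb : ∀ (π : Equiv.Perm W) (h : ∀ v ∈ X, π v ∈ Y),
        Function.Injective (fun v : ↥X => (⟨π v, h v v.2⟩ : ↥Y)) := by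
      intro π h a b hab
      apply Subtype.ext
      exact π.injective (congrArg Subtype.val hab)
    let femb : (π : Equiv.Perm W) → (∀ v ∈ X, π v ∈ Y) → (↥X ↪ ↥Y) :=
      fun π h => ⟨fun v => ⟨π v, h v v.2⟩, hfemb π h⟩
    have hmemC1 : ∀ v : W, v ∉ X → v ∈ C1 := by intro v hv; simp [hC1, hv]
    have hπC : ∀ (π : Equiv.Perm W) (h : ∀ v ∈ X, π v ∈ Y) (v : W), v ∉ X →
        π v ∈ Finset.univ \ img (femb π h) := by
      intro π h v hv
      simp only [Finset.mem_sdiff, Finset.mem_univ, true_and]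
      rw [hmemimg]
      rintro ⟨u, hu⟩
      have : π (u : W) = π v := hu
      exact hv (π.injective this ▸ u.2)
    have hπC' : ∀ (π : Equiv.Perm W) (h : ∀ v ∈ X, π v ∈ Y) (w : W),
        w ∈ Finset.univ \ img (femb π h) → π.symm w ∉ X := by
      intro π h w hw hmem
      simp only [Finset.mem_sdiff, Finset.mem_univ, true_and] at hw
      apply hw
      rw [hmemimg]
      exact ⟨⟨π.symm w, hmem⟩, by simp [femb]⟩
    let eπ : (π : Equiv.Perm W) → (h : ∀ v ∈ X, π v ∈ Y) →
        (↥C1 ≃ ↥(Finset.univ \ img (femb π h))) := fun π h =>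
      { toFun := fun v => ⟨π v, hπC π h v (Finset.mem_sdiff.mp v.2).2⟩
        invFun := fun w => ⟨π.symm w, hmemC1 _ (hπC' π h w w.2)⟩
        left_inv := by intro v; apply Subtype.ext; simp
        right_inv := by intro w; apply Subtype.ext; simp }
    let Φ : {π : Equiv.Perm W // ∀ v ∈ X, π v ∈ Y} →
        ((↥X ↪ ↥Y) × Equiv.Perm (Fin C1.card)) := fun p =>
      ⟨femb p.1 p.2,
        (C1.equivFin).symm.trans (((eπ p.1 p.2).trans
          ((Finset.univ \ img (femb p.1 p.2)).equivFin)).trans (finCongr (hcard _)))⟩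
    have hrecon : ∀ (p : {π : Equiv.Perm W // ∀ v ∈ X, π v ∈ Y}) (v : W),
        p.1 v = if hv : v ∈ X then (((Φ p).1 ⟨v, hv⟩ : ↥Y) : W) else
          ((((Finset.univ \ img (Φ p).1).equivFin).symm
            ((finCongr ((hcard (Φ p).1).symm)) ((Φ p).2 (C1.equivFin ⟨v, hmemC1 v hv⟩)))) : W) := by
      intro p v
      by_cases hv : v ∈ X
      · simp [Φ, femb, hv]
      · simp only [hv, dite_false]
        simp [Φ, femb, eπ, Equiv.trans_apply, Equiv.symm_apply_apply, finCongr_symm_apply]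
    apply Fintype.card_le_of_injective Φ
    intro a b hab
    apply Subtype.ext
    apply Equiv.coe_fn_injective
    funext v
    exact (hrecon a v).trans (by rw [hab]; exact (hrecon b v).symm)
  calc Fintype.card {π : Equiv.Perm W // ∀ v ∈ X, π v ∈ Y}
      ≤ Fintype.card ((↥X ↪ ↥Y) × Equiv.Perm (Fin C1.card)) := hbound
  _ = (Y.card).descFactorial X.card * (C1.card).factorial := by
      rw [Fintype.card_prod, Fintype.card_embedding_eq, Fintype.card_perm]
      simp [Fintype.card_coe]



lemma sigma_exists (m : ℕ) (hm : 1 ≤ m) :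
    ∃ σ : Fin 83 → Equiv.Perm (Fin m × Fin 5),
      ∀ X : Finset (Fin m × Fin 5), X.card ≤ 2*m →
        2 * X.card ≤ (Finset.univ.biUnion (fun t => X.image (σ t))).card ∧
        2 * X.card ≤ (Finset.univ.biUnion (fun t => X.image ((σ t).symm))).card := by
  classical
  set W := (Fin m × Fin 5)
  have hcW : Fintype.card W = 5*m := by
    simp [W, Fintype.card_prod, mul_comm]
  set T : ℕ := ((5*m).factorial)^83 with hT
  have hTpos : 0 < T := pow_pos (Nat.factorial_pos _) _
  have hΩcard : Fintype.card (Fin 83 → Equiv.Perm W) = T := by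
    rw [hT]
    rw [Fintype.card_fun]
    rw [Fintype.card_perm, hcW]
    simp
  -- bad sets
  set badF : Finset W → Finset W → Finset (Fin 83 → Equiv.Perm W) := fun X Y =>
    Finset.univ.filter (fun σs => ∀ t, ∀ v ∈ X, σs t v ∈ Y) with hbadF
  set badB : Finset W → Finset W → Finset (Fin 83 → Equiv.Perm W) := fun X Y =>
    Finset.univ.filter (fun σs => ∀ t, ∀ v ∈ X, (σs t).symm v ∈ Y) with hbadB
  have hcardF : ∀ X Y : Finset W, (badF X Y).card =
      ((Finset.univ.filter (fun π : Equiv.Perm W => ∀ v ∈ X, π v ∈ Y)).card)^83 := by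
    intro X Y
    have : badF X Y = Fintype.piFinset
        (fun _ : Fin 83 => Finset.univ.filter (fun π : Equiv.Perm W => ∀ v ∈ X, π v ∈ Y)) := by
      ext σs
      simp only [Fintype.mem_piFinset, hbadF, Finset.mem_filter, Finset.mem_univ, true_and]
    rw [this, Fintype.card_piFinset]
    simp
  have hcardB : ∀ X Y : Finset W, (badB X Y).card =
      ((Finset.univ.filter (fun π : Equiv.Perm W => ∀ v ∈ X, π v ∈ Y)).card)^83 := by
    intro X Y
    have h1 : badB X Y = Fintype.piFinset
        (fun _ : Fin 83 => Finset.univ.filter (fun π : Equiv.Perm W => ∀ v ∈ X, π.symm v ∈ Y)) := by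
      ext σs
      simp only [Fintype.mem_piFinset, hbadB, Finset.mem_filter, Finset.mem_univ, true_and]
    have h2 : (Finset.univ.filter (fun π : Equiv.Perm W => ∀ v ∈ X, π.symm v ∈ Y)).card
        = (Finset.univ.filter (fun π : Equiv.Perm W => ∀ v ∈ X, π v ∈ Y)).card := by
      apply Finset.card_nbij (fun π => π.symm)
      · intro π hπ
        simp only [Finset.mem_filter, Finset.mem_univ, true_and] at hπ ⊢
        simpa using hπ
      · intro a ha b hb hab
        simpa using congrArg Equiv.symm hab
      · intro π hπ
        simp only [Finset.coe_filter, Set.mem_setOf_eq, Set.mem_image] at hπ ⊢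
        exact ⟨π.symm, by simpa using hπ, by simp⟩
    rw [h1, Fintype.card_piFinset]
    simp [h2]
  have hbound : ∀ (X Y : Finset W), X.card ≤ 2*m → Y.card = 2 * X.card → 1 ≤ X.card →
      ((badF X Y).card + (badB X Y).card) * 2^(2*X.card) *
        ((5*m).choose X.card * (5*m).choose (2*X.card)) ≤ T := by
    intro X Y hX hY hX1
    set x := X.card with hx
    have hperm := perm_count X Y
    have hkey := key_ineq (5*m) x hX1 (by omega) (by omega)
    have hdiff : (Finset.univ \ X).card = 5*m - x := by
      rw [Finset.card_univ_diff, hcW]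
    rw [hcardF, hcardB]
    have h2 : ((Finset.univ.filter (fun π : Equiv.Perm W => ∀ v ∈ X, π v ∈ Y)).card)^83
        ≤ ((2*x).descFactorial x * (5*m - x).factorial)^83 := by
      apply Nat.pow_le_pow_left
      rw [hY, hdiff, hx] at hperm
      exact hperm
    set B := ((2*x).descFactorial x * (5*m - x).factorial)^83 with hB
    calc (((Finset.univ.filter (fun π : Equiv.Perm W => ∀ v ∈ X, π v ∈ Y)).card)^83 +
          ((Finset.univ.filter (fun π : Equiv.Perm W => ∀ v ∈ X, π v ∈ Y)).card)^83) * 2^(2*x) *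
          ((5*m).choose x * (5*m).choose (2*x))
        ≤ (B + B) * 2^(2*x) * ((5*m).choose x * (5*m).choose (2*x)) :=
          Nat.mul_le_mul_right _ (Nat.mul_le_mul_right _ (Nat.add_le_add h2 h2))
    _ = 2^(2*x) * (2 * ((5*m).choose x * ((5*m).choose (2*x) * B))) := by ring
    _ ≤ T := by rw [hT]; exact hkey
  -- the global bad set
  set Bad : Finset (Fin 83 → Equiv.Perm W) := (Finset.range (2*m)).biUnion (fun j =>
    ((Finset.univ.powersetCard (j+1)) ×ˢ (Finset.univ.powersetCard (2*(j+1)))).biUnion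
      (fun XY => badF XY.1 XY.2 ∪ badB XY.1 XY.2)) with hBad
  have hBadCard : Bad.card < T := by
    calc Bad.card ≤ ∑ j ∈ Finset.range (2*m),
        (((Finset.univ.powersetCard (j+1) : Finset (Finset W)) ×ˢ
          (Finset.univ.powersetCard (2*(j+1)))).biUnion
            (fun XY => badF XY.1 XY.2 ∪ badB XY.1 XY.2)).card := Finset.card_biUnion_le
    _ ≤ ∑ j ∈ Finset.range (2*m), (T/2) / 2^(j+1) := by
        apply Finset.sum_le_sum
        intro j hj
        rw [Finset.mem_range] at hj
        have hstep : ∀ XY ∈ ((Finset.univ.powersetCard (j+1) : Finset (Finset W)) ×ˢ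
            (Finset.univ.powersetCard (2*(j+1)))),
            (badF XY.1 XY.2 ∪ badB XY.1 XY.2).card ≤
              T / (2^(2*(j+1)) * ((5*m).choose (j+1) * (5*m).choose (2*(j+1)))) := by
          intro XY hXY
          rw [Finset.mem_product] at hXY
          obtain ⟨hX, hY⟩ := hXY
          rw [Finset.mem_powersetCard] at hX hY
          have hXc : XY.1.card = j+1 := hX.2
          have hYc : XY.2.card = 2*(j+1) := hY.2
          have hc1 : 0 < (5*m).choose (j+1) := Nat.choose_pos (by omega)
          have hc2 : 0 < (5*m).choose (2*(j+1)) := Nat.choose_pos (by omega)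
          rw [Nat.le_div_iff_mul_le (by positivity)]
          calc (badF XY.1 XY.2 ∪ badB XY.1 XY.2).card *
                (2^(2*(j+1)) * ((5*m).choose (j+1) * (5*m).choose (2*(j+1))))
              ≤ ((badF XY.1 XY.2).card + (badB XY.1 XY.2).card) *
                (2^(2*(j+1)) * ((5*m).choose (j+1) * (5*m).choose (2*(j+1)))) :=
                Nat.mul_le_mul_right _ (Finset.card_union_le _ _)
          _ = ((badF XY.1 XY.2).card + (badB XY.1 XY.2).card) * 2^(2*XY.1.card) *
                ((5*m).choose XY.1.card * (5*m).choose (2*XY.1.card)) := by rw [hXc]; ring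
          _ ≤ T := hbound XY.1 XY.2 (by omega) (by omega) (by omega)
        calc (((Finset.univ.powersetCard (j+1) : Finset (Finset W)) ×ˢ
            (Finset.univ.powersetCard (2*(j+1)))).biUnion
              (fun XY => badF XY.1 XY.2 ∪ badB XY.1 XY.2)).card
            ≤ ∑ XY ∈ ((Finset.univ.powersetCard (j+1) : Finset (Finset W)) ×ˢ
              (Finset.univ.powersetCard (2*(j+1)))),
                (badF XY.1 XY.2 ∪ badB XY.1 XY.2).card := Finset.card_biUnion_le
        _ ≤ ∑ _XY ∈ ((Finset.univ.powersetCard (j+1) : Finset (Finset W)) ×ˢ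
              (Finset.univ.powersetCard (2*(j+1)))),
              (T / (2^(2*(j+1)) * ((5*m).choose (j+1) * (5*m).choose (2*(j+1))))) :=
            Finset.sum_le_sum hstep
        _ = (((Finset.univ.powersetCard (j+1) : Finset (Finset W))).card *
              ((Finset.univ.powersetCard (2*(j+1)) : Finset (Finset W))).card) *
              (T / (2^(2*(j+1)) * ((5*m).choose (j+1) * (5*m).choose (2*(j+1))))) := by
            rw [Finset.sum_const, Finset.card_product, smul_eq_mul]
        _ = ((5*m).choose (j+1) * (5*m).choose (2*(j+1))) *
              ((T / 2^(2*(j+1))) / ((5*m).choose (j+1) * (5*m).choose (2*(j+1)))) := by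
            rw [Finset.card_powersetCard, Finset.card_powersetCard, Finset.card_univ, hcW,
              Nat.div_div_eq_div_mul]
        _ ≤ T / 2^(2*(j+1)) := by
            rw [mul_comm]
            exact Nat.div_mul_le_self _ _
        _ ≤ (T/2) / 2^(j+1) := by
            have h1 : T / 2^(2*(j+1)) ≤ T / 2^(j+2) :=
              Nat.div_le_div_left (Nat.pow_le_pow_right (by norm_num) (by omega)) (Nat.pow_pos (by norm_num))
            have h2 : T / 2^(j+2) = (T/2) / 2^(j+1) := by
              rw [Nat.div_div_eq_div_mul]
              congr 1
              rw [pow_succ, pow_succ]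
              ring
            omega
    _ ≤ T/2 := by
        have h := sum_halves (T/2) (2*m)
        exact le_trans (Nat.le_add_right _ _) h
    _ < T := Nat.div_lt_self hTpos one_lt_two
  -- extract good tuple
  have hgood : ∃ σs : Fin 83 → Equiv.Perm W, σs ∉ Bad := by
    by_contra hcon
    push_neg at hcon
    have : (Finset.univ : Finset (Fin 83 → Equiv.Perm W)) ⊆ Bad := fun σs _ => hcon σs
    have := Finset.card_le_card this
    rw [Finset.card_univ, hΩcard] at this
    omega
  obtain ⟨σs, hσs⟩ := hgood
  refine ⟨σs, ?_⟩
  intro X hX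
  constructor
  · by_contra hcon
    push_neg at hcon
    have hX1 : 1 ≤ X.card := by omega
    obtain ⟨Y, hNY, hYcard⟩ := Finset.exists_superset_card_eq (le_of_lt hcon)
      (by rw [hcW]; omega)
    apply hσs
    rw [hBad]
    rw [Finset.mem_biUnion]
    refine ⟨X.card - 1, by rw [Finset.mem_range]; omega, ?_⟩
    rw [Finset.mem_biUnion]
    refine ⟨(X, Y), ?_, ?_⟩
    · rw [Finset.mem_product, Finset.mem_powersetCard, Finset.mem_powersetCard]
      refine ⟨⟨Finset.subset_univ _, by show X.card = X.card - 1 + 1; omega⟩,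
        ⟨Finset.subset_univ _, by show Y.card = 2*(X.card - 1 + 1); omega⟩⟩
    · apply Finset.mem_union_left
      rw [hbadF, Finset.mem_filter]
      refine ⟨Finset.mem_univ _, ?_⟩
      intro t v hv
      apply hNY
      rw [Finset.mem_biUnion]
      exact ⟨t, Finset.mem_univ _, Finset.mem_image_of_mem _ hv⟩
  · by_contra hcon
    push_neg at hcon
    have hX1 : 1 ≤ X.card := by omega
    obtain ⟨Y, hNY, hYcard⟩ := Finset.exists_superset_card_eq (le_of_lt hcon)
      (by rw [hcW]; omega)
    apply hσs
    rw [hBad]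
    rw [Finset.mem_biUnion]
    refine ⟨X.card - 1, by rw [Finset.mem_range]; omega, ?_⟩
    rw [Finset.mem_biUnion]
    refine ⟨(X, Y), ?_, ?_⟩
    · rw [Finset.mem_product, Finset.mem_powersetCard, Finset.mem_powersetCard]
      refine ⟨⟨Finset.subset_univ _, by show X.card = X.card - 1 + 1; omega⟩,
        ⟨Finset.subset_univ _, by show Y.card = 2*(X.card - 1 + 1); omega⟩⟩
    · apply Finset.mem_union_right
      rw [hbadB, Finset.mem_filter]
      refine ⟨Finset.mem_univ _, ?_⟩
      intro t v hv
      apply hNY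
      rw [Finset.mem_biUnion]
      exact ⟨t, Finset.mem_univ _, Finset.mem_image_of_mem _ hv⟩



lemma dual_hall {V : Type*} [DecidableEq V] (A B : Finset V) (r : V → V → Prop)
    [DecidableRel r] (hAB : A.card = B.card)
    (h1 : ∀ s ⊆ A, 2*s.card ≤ A.card + 1 →
      s.card ≤ (s.biUnion (fun u => B.filter (fun v => r u v))).card)
    (h2 : ∀ z ⊆ B, 2*z.card ≤ B.card + 1 →
      z.card ≤ (z.biUnion (fun v => A.filter (fun u => r u v))).card) :
    ∀ s ⊆ A, s.card ≤ (s.biUnion (fun u => B.filter (fun v => r u v))).card := by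
  intro s hs
  by_cases hsm : 2*s.card ≤ A.card + 1
  · exact h1 s hs hsm
  · push_neg at hsm
    set Ns := s.biUnion (fun u => B.filter (fun v => r u v)) with hNs
    have hNsB : Ns ⊆ B := by
      intro v hv
      rw [hNs, Finset.mem_biUnion] at hv
      obtain ⟨u, _, hv⟩ := hv
      exact (Finset.mem_filter.mp hv).1
    have hscard : s.card ≤ A.card := Finset.card_le_card hs
    obtain ⟨s', hs's, hs'card⟩ := Finset.exists_subset_card_eq
      (s := s) (n := (A.card+1)/2) (by omega)
    have hNs' : s'.biUnion (fun u => B.filter (fun v => r u v)) ⊆ Ns :=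
      Finset.biUnion_subset_biUnion_of_subset_left _ hs's
    have hge : (A.card+1)/2 ≤ Ns.card := by
      have ha := h1 s' (hs's.trans hs) (by omega)
      have hb := Finset.card_le_card hNs'
      omega
    set Z := B \ Ns with hZ
    have hZB : Z ⊆ B := Finset.sdiff_subset
    have hZcard : Z.card = B.card - Ns.card := Finset.card_sdiff_of_subset hNsB
    have hz := h2 Z hZB (by omega)
    have hsubZ : Z.biUnion (fun v => A.filter (fun u => r u v)) ⊆ A \ s := by
      intro u hu
      rw [Finset.mem_biUnion] at hu
      obtain ⟨v, hvZ, hu⟩ := hu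
      rw [Finset.mem_filter] at hu
      rw [Finset.mem_sdiff]
      refine ⟨hu.1, fun hus => ?_⟩
      have hvB : v ∈ B := (Finset.mem_sdiff.mp hvZ).1
      have : v ∈ Ns := by
        rw [hNs, Finset.mem_biUnion]
        exact ⟨u, hus, Finset.mem_filter.mpr ⟨hvB, hu.2⟩⟩
      exact (Finset.mem_sdiff.mp hvZ).2 this
    have hcard2 := Finset.card_le_card hsubZ
    have hAs : (A \ s).card = A.card - s.card := Finset.card_sdiff_of_subset hs
    have hNscard : Ns.card ≤ B.card := Finset.card_le_card hNsB
    omega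

def Mblk (m : ℕ) (σ : Fin 83 → Equiv.Perm (Fin m × Fin 5)) :
    (Fin m × Fin 2) ⊕ (Fin m × Fin 5) → (Fin m × Fin 2) ⊕ (Fin m × Fin 5) → ℕ
  | Sum.inl p, Sum.inl q => if q = p then 53 else 0
  | Sum.inl p, Sum.inr q => if q.1 = p.1 then 10 else 0
  | Sum.inr p, Sum.inl q => if q.1 = p.1 then 10 else 0
  | Sum.inr p, Sum.inr q => ∑ t : Fin 83, if σ t p = q then 1 else 0

lemma Mblk_row (m : ℕ) (σ : Fin 83 → Equiv.Perm (Fin m × Fin 5))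
    (u : (Fin m × Fin 2) ⊕ (Fin m × Fin 5)) : ∑ v, Mblk m σ u v = 103 := by
  cases u with
  | inl p =>
    rw [Fintype.sum_sum_type]
    have h1 : ∑ q : Fin m × Fin 2, Mblk m σ (Sum.inl p) (Sum.inl q) = 53 := by
      simp [Mblk]
    have h2 : ∑ q : Fin m × Fin 5, Mblk m σ (Sum.inl p) (Sum.inr q) = 50 := by
      show ∑ q : Fin m × Fin 5, (if q.1 = p.1 then 10 else 0) = 50
      rw [Fintype.sum_prod_type]
      have : ∀ b : Fin m, (∑ s : Fin 5, if (b, s).1 = p.1 then 10 else 0)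
          = if b = p.1 then 50 else 0 := by
        intro b
        by_cases hb : b = p.1 <;> simp [hb]
      rw [Finset.sum_congr rfl (fun b _ => this b)]
      simp
    omega
  | inr p =>
    rw [Fintype.sum_sum_type]
    have h1 : ∑ q : Fin m × Fin 2, Mblk m σ (Sum.inr p) (Sum.inl q) = 20 := by
      show ∑ q : Fin m × Fin 2, (if q.1 = p.1 then 10 else 0) = 20
      rw [Fintype.sum_prod_type]
      have : ∀ b : Fin m, (∑ s : Fin 2, if (b, s).1 = p.1 then 10 else 0)
          = if b = p.1 then 20 else 0 := by
        intro b
        by_cases hb : b = p.1 <;> simp [hb]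
      rw [Finset.sum_congr rfl (fun b _ => this b)]
      simp
    have h2 : ∑ q : Fin m × Fin 5, Mblk m σ (Sum.inr p) (Sum.inr q) = 83 := by
      show ∑ q : Fin m × Fin 5, (∑ t : Fin 83, if σ t p = q then 1 else 0) = 83
      rw [Finset.sum_comm]
      have : ∀ t : Fin 83, (∑ q : Fin m × Fin 5, if σ t p = q then 1 else 0) = 1 := by
        intro t
        simp
      rw [Finset.sum_congr rfl (fun t _ => this t)]
      simp
    omega

lemma Mblk_col (m : ℕ) (σ : Fin 83 → Equiv.Perm (Fin m × Fin 5))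
    (v : (Fin m × Fin 2) ⊕ (Fin m × Fin 5)) : ∑ u, Mblk m σ u v = 103 := by
  cases v with
  | inl q =>
    rw [Fintype.sum_sum_type]
    have h1 : ∑ p : Fin m × Fin 2, Mblk m σ (Sum.inl p) (Sum.inl q) = 53 := by
      simp [Mblk]
    have h2 : ∑ p : Fin m × Fin 5, Mblk m σ (Sum.inr p) (Sum.inl q) = 50 := by
      show ∑ p : Fin m × Fin 5, (if q.1 = p.1 then 10 else 0) = 50
      rw [Fintype.sum_prod_type]
      have : ∀ b : Fin m, (∑ s : Fin 5, if q.1 = (b, s).1 then 10 else 0)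
          = if q.1 = b then 50 else 0 := by
        intro b
        by_cases hb : q.1 = b <;> simp [hb]
      rw [Finset.sum_congr rfl (fun b _ => this b)]
      simp
    omega
  | inr q =>
    rw [Fintype.sum_sum_type]
    have h1 : ∑ p : Fin m × Fin 2, Mblk m σ (Sum.inl p) (Sum.inr q) = 20 := by
      show ∑ p : Fin m × Fin 2, (if q.1 = p.1 then 10 else 0) = 20
      rw [Fintype.sum_prod_type]
      have : ∀ b : Fin m, (∑ s : Fin 2, if q.1 = (b, s).1 then 10 else 0)
          = if q.1 = b then 20 else 0 := by
        intro b
        by_cases hb : q.1 = b <;> simp [hb]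
      rw [Finset.sum_congr rfl (fun b _ => this b)]
      simp
    have h2 : ∑ p : Fin m × Fin 5, Mblk m σ (Sum.inr p) (Sum.inr q) = 83 := by
      show ∑ p : Fin m × Fin 5, (∑ t : Fin 83, if σ t p = q then 1 else 0) = 83
      rw [Finset.sum_comm]
      have : ∀ t : Fin 83, (∑ p : Fin m × Fin 5, if σ t p = q then 1 else 0) = 1 := by
        intro t
        have : ∀ p : Fin m × Fin 5, (σ t p = q) = (p = (σ t).symm q) := by
          intro p
          rw [eq_iff_iff]
          constructor
          · intro h; rw [← h]; simp
          · intro h; rw [h]; simp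
        simp only [this]
        simp
      rw [Finset.sum_congr rfl (fun t _ => this t)]
      simp
    omega



variable {m : ℕ} {σ : Fin 83 → Equiv.Perm (Fin m × Fin 5)}

lemma fiber_le_two (sL : Finset (Fin m × Fin 2)) (b : Fin m)
    (hb : b ∈ sL.image Prod.fst) : (sL.filter (fun a => a.1 = b)).card ≤ 2 := by
  have hsub : sL.filter (fun a => a.1 = b) ⊆ {(b, (0 : Fin 2)), (b, 1)} := by
    intro a ha
    rw [Finset.mem_filter] at ha
    have h2 : a = (b, a.2) := by
      rw [← ha.2]
    rw [Finset.mem_insert, Finset.mem_singleton]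
    have hv := a.2.isLt
    have hv2 : (a.2 : ℕ) = 0 ∨ (a.2 : ℕ) = 1 := by omega
    rcases hv2 with h | h
    · left; rw [h2]; congr 1; exact Fin.ext h
    · right; rw [h2]; congr 1; exact Fin.ext h
  calc (sL.filter (fun a => a.1 = b)).card ≤ ({(b, (0:Fin 2)), (b, 1)} : Finset _).card :=
        Finset.card_le_card hsub
  _ ≤ 2 := by
      apply le_trans (Finset.card_insert_le _ _)
      simp

lemma card_prod5 (Blk : Finset (Fin m)) :
    (Blk ×ˢ (univ : Finset (Fin 5))).card = 5 * Blk.card := by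
  rw [Finset.card_product]
  simp [mul_comm]

/-- Left Hall condition for small sets. -/
lemma core_left (hm : 1 ≤ m)
    (hσ : ∀ X : Finset (Fin m × Fin 5), X.card ≤ 2*m →
      2 * X.card ≤ (Finset.univ.biUnion (fun t => X.image (σ t))).card ∧
      2 * X.card ≤ (Finset.univ.biUnion (fun t => X.image ((σ t).symm))).card)
    (A' B' : Finset (Fin m × Fin 2)) (hA' : A'.card ≤ 2*m) :
    ∀ s ⊆ (A'.image Sum.inl ∪ (univ.image Sum.inr)),
      2*s.card ≤ (A'.image Sum.inl ∪ (univ.image Sum.inr) :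
        Finset ((Fin m × Fin 2) ⊕ (Fin m × Fin 5))).card + 1 →
      s.card ≤ (s.biUnion (fun u => (B'.image Sum.inl ∪ (univ.image Sum.inr)).filter
        (fun v => 1 ≤ Mblk m σ u v))).card := by
  intro s hs hsize
  set T : Finset ((Fin m × Fin 2) ⊕ (Fin m × Fin 5)) :=
    B'.image Sum.inl ∪ (univ.image Sum.inr) with hT
  set NT := s.biUnion (fun u => T.filter (fun v => 1 ≤ Mblk m σ u v)) with hNT
  have hScard : (A'.image Sum.inl ∪ (univ.image Sum.inr) :
      Finset ((Fin m × Fin 2) ⊕ (Fin m × Fin 5))).card ≤ 2*m + 5*m := by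
    calc _ ≤ (A'.image Sum.inl).card + ((univ.image Sum.inr :
            Finset ((Fin m × Fin 2) ⊕ (Fin m × Fin 5)))).card :=
          Finset.card_union_le _ _
    _ ≤ 2*m + 5*m := by
        have e1 : (A'.image (Sum.inl : Fin m × Fin 2 → (Fin m × Fin 2) ⊕ (Fin m × Fin 5))).card
            = A'.card :=
          Finset.card_image_of_injective _ Sum.inl_injective
        have e2 : (((univ : Finset (Fin m × Fin 5)).image
            (Sum.inr : Fin m × Fin 5 → (Fin m × Fin 2) ⊕ (Fin m × Fin 5)))).card = 5*m := by
          rw [Finset.card_image_of_injective _ Sum.inr_injective]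
          simp [Finset.card_univ, mul_comm]
        omega
  have hsplit := Finset.card_toLeft_add_card_toRight (u := s)
  have hinrT : ∀ q : Fin m × Fin 5, (Sum.inr q : (Fin m × Fin 2) ⊕ (Fin m × Fin 5)) ∈ T := by
    intro q
    exact Finset.mem_union_right _ (Finset.mem_image_of_mem _ (Finset.mem_univ _))
  by_cases hcase : s.card ≤ 2 * s.toRight.card
  · -- route through the permutations
    set c0 := (s.card + 1)/2 with hc0
    obtain ⟨X, hXsub, hXcard⟩ := Finset.exists_subset_card_eq
      (s := s.toRight) (n := c0) (by omega)
    have hexp := (hσ X (by omega)).1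
    have hsubN : ((univ.biUnion (fun t => X.image (σ t))).image Sum.inr) ⊆ NT := by
      intro v hv
      rw [Finset.mem_image] at hv
      obtain ⟨w, hw, rfl⟩ := hv
      rw [Finset.mem_biUnion] at hw
      obtain ⟨t, _, hw⟩ := hw
      rw [Finset.mem_image] at hw
      obtain ⟨p, hpX, rfl⟩ := hw
      rw [hNT, Finset.mem_biUnion]
      refine ⟨Sum.inr p, Finset.mem_toRight.mp (hXsub hpX), ?_⟩
      rw [Finset.mem_filter]
      refine ⟨hinrT _, ?_⟩
      show 1 ≤ ∑ t' : Fin 83, if σ t' p = σ t p then 1 else 0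
      calc 1 = if σ t p = σ t p then 1 else 0 := by simp
      _ ≤ _ := Finset.single_le_sum (f := fun t' => if σ t' p = σ t p then 1 else 0)
            (fun _ _ => Nat.zero_le _) (Finset.mem_univ t)
    calc s.card ≤ 2 * c0 := by omega
    _ = 2 * X.card := by rw [hXcard]
    _ ≤ (univ.biUnion (fun t => X.image (σ t))).card := hexp
    _ = ((univ.biUnion (fun t => X.image (σ t))).image Sum.inr).card :=
        (Finset.card_image_of_injective _ Sum.inr_injective).symm
    _ ≤ NT.card := Finset.card_le_card hsubN
  · -- route through the blocks
    set Blk := s.toLeft.image Prod.fst with hBlk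
    have hfib : s.toLeft.card ≤ 2 * Blk.card :=
      Finset.card_le_mul_card_image _ 2 (fun b hb => fiber_le_two _ b hb)
    have hsubN : ((Blk ×ˢ (univ : Finset (Fin 5))).image Sum.inr) ⊆ NT := by
      intro v hv
      rw [Finset.mem_image] at hv
      obtain ⟨w, hw, rfl⟩ := hv
      rw [Finset.mem_product] at hw
      obtain ⟨hw1, _⟩ := hw
      rw [hBlk, Finset.mem_image] at hw1
      obtain ⟨a, ha, hab⟩ := hw1
      rw [hNT, Finset.mem_biUnion]
      refine ⟨Sum.inl a, Finset.mem_toLeft.mp ha, ?_⟩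
      rw [Finset.mem_filter]
      refine ⟨hinrT _, ?_⟩
      show 1 ≤ (if w.1 = a.1 then 10 else 0)
      rw [hab]
      simp
    calc s.card ≤ 5 * Blk.card := by omega
    _ = (Blk ×ˢ (univ : Finset (Fin 5))).card := (card_prod5 _).symm
    _ = ((Blk ×ˢ (univ : Finset (Fin 5))).image Sum.inr).card :=
        (Finset.card_image_of_injective _ Sum.inr_injective).symm
    _ ≤ NT.card := Finset.card_le_card hsubN

/-- Right Hall condition for small sets. -/
lemma core_right (hm : 1 ≤ m)
    (hσ : ∀ X : Finset (Fin m × Fin 5), X.card ≤ 2*m →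
      2 * X.card ≤ (Finset.univ.biUnion (fun t => X.image (σ t))).card ∧
      2 * X.card ≤ (Finset.univ.biUnion (fun t => X.image ((σ t).symm))).card)
    (A' B' : Finset (Fin m × Fin 2)) (hB' : B'.card ≤ 2*m) :
    ∀ z ⊆ (B'.image Sum.inl ∪ (univ.image Sum.inr)),
      2*z.card ≤ (B'.image Sum.inl ∪ (univ.image Sum.inr) :
        Finset ((Fin m × Fin 2) ⊕ (Fin m × Fin 5))).card + 1 →
      z.card ≤ (z.biUnion (fun v => (A'.image Sum.inl ∪ (univ.image Sum.inr)).filter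
        (fun u => 1 ≤ Mblk m σ u v))).card := by
  intro z hz hsize
  set S : Finset ((Fin m × Fin 2) ⊕ (Fin m × Fin 5)) :=
    A'.image Sum.inl ∪ (univ.image Sum.inr) with hS
  set NS := z.biUnion (fun v => S.filter (fun u => 1 ≤ Mblk m σ u v)) with hNS
  have hTcard : (B'.image Sum.inl ∪ (univ.image Sum.inr) :
      Finset ((Fin m × Fin 2) ⊕ (Fin m × Fin 5))).card ≤ 2*m + 5*m := by
    calc _ ≤ (B'.image Sum.inl).card + ((univ.image Sum.inr :
            Finset ((Fin m × Fin 2) ⊕ (Fin m × Fin 5)))).card :=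
          Finset.card_union_le _ _
    _ ≤ 2*m + 5*m := by
        have e1 : (B'.image (Sum.inl : Fin m × Fin 2 → (Fin m × Fin 2) ⊕ (Fin m × Fin 5))).card
            = B'.card :=
          Finset.card_image_of_injective _ Sum.inl_injective
        have e2 : (((univ : Finset (Fin m × Fin 5)).image
            (Sum.inr : Fin m × Fin 5 → (Fin m × Fin 2) ⊕ (Fin m × Fin 5)))).card = 5*m := by
          rw [Finset.card_image_of_injective _ Sum.inr_injective]
          simp [Finset.card_univ, mul_comm]
        omega
  have hsplit := Finset.card_toLeft_add_card_toRight (u := z)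
  have hinrS : ∀ q : Fin m × Fin 5, (Sum.inr q : (Fin m × Fin 2) ⊕ (Fin m × Fin 5)) ∈ S := by
    intro q
    exact Finset.mem_union_right _ (Finset.mem_image_of_mem _ (Finset.mem_univ _))
  by_cases hcase : z.card ≤ 2 * z.toRight.card
  · set c0 := (z.card + 1)/2 with hc0
    obtain ⟨X, hXsub, hXcard⟩ := Finset.exists_subset_card_eq
      (s := z.toRight) (n := c0) (by omega)
    have hexp := (hσ X (by omega)).2
    have hsubN : ((univ.biUnion (fun t => X.image ((σ t).symm))).image Sum.inr) ⊆ NS := by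
      intro u hu
      rw [Finset.mem_image] at hu
      obtain ⟨w, hw, rfl⟩ := hu
      rw [Finset.mem_biUnion] at hw
      obtain ⟨t, _, hw⟩ := hw
      rw [Finset.mem_image] at hw
      obtain ⟨q, hqX, rfl⟩ := hw
      rw [hNS, Finset.mem_biUnion]
      refine ⟨Sum.inr q, Finset.mem_toRight.mp (hXsub hqX), ?_⟩
      rw [Finset.mem_filter]
      refine ⟨hinrS _, ?_⟩
      show 1 ≤ ∑ t' : Fin 83, if σ t' ((σ t).symm q) = q then 1 else 0
      have hterm : (if σ t ((σ t).symm q) = q then 1 else 0) = 1 := by simp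
      calc 1 = if σ t ((σ t).symm q) = q then 1 else 0 := hterm.symm
      _ ≤ _ := Finset.single_le_sum (f := fun t' => if σ t' ((σ t).symm q) = q then 1 else 0)
            (fun _ _ => Nat.zero_le _) (Finset.mem_univ t)
    calc z.card ≤ 2 * c0 := by omega
    _ = 2 * X.card := by rw [hXcard]
    _ ≤ (univ.biUnion (fun t => X.image ((σ t).symm))).card := hexp
    _ = ((univ.biUnion (fun t => X.image ((σ t).symm))).image Sum.inr).card :=
        (Finset.card_image_of_injective _ Sum.inr_injective).symm
    _ ≤ NS.card := Finset.card_le_card hsubN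
  · set Blk := z.toLeft.image Prod.fst with hBlk
    have hfib : z.toLeft.card ≤ 2 * Blk.card :=
      Finset.card_le_mul_card_image _ 2 (fun b hb => fiber_le_two _ b hb)
    have hsubN : ((Blk ×ˢ (univ : Finset (Fin 5))).image Sum.inr) ⊆ NS := by
      intro u hu
      rw [Finset.mem_image] at hu
      obtain ⟨w, hw, rfl⟩ := hu
      rw [Finset.mem_product] at hw
      obtain ⟨hw1, _⟩ := hw
      rw [hBlk, Finset.mem_image] at hw1
      obtain ⟨a, ha, hab⟩ := hw1
      rw [hNS, Finset.mem_biUnion]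
      refine ⟨Sum.inl a, Finset.mem_toLeft.mp ha, ?_⟩
      rw [Finset.mem_filter]
      refine ⟨hinrS _, ?_⟩
      show 1 ≤ (if a.1 = w.1 then 10 else 0)
      rw [hab]
      simp
    calc z.card ≤ 5 * Blk.card := by omega
    _ = (Blk ×ˢ (univ : Finset (Fin 5))).card := (card_prod5 _).symm
    _ = ((Blk ×ˢ (univ : Finset (Fin 5))).image Sum.inr).card :=
        (Finset.card_image_of_injective _ Sum.inr_injective).symm
    _ ≤ NS.card := Finset.card_le_card hsubN



lemma blk_matching (m : ℕ) (hm : 1 ≤ m)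
    (σ : Fin 83 → Equiv.Perm (Fin m × Fin 5))
    (hσ : ∀ X : Finset (Fin m × Fin 5), X.card ≤ 2*m →
      2 * X.card ≤ (Finset.univ.biUnion (fun t => X.image (σ t))).card ∧
      2 * X.card ≤ (Finset.univ.biUnion (fun t => X.image ((σ t).symm))).card)
    (A' B' : Finset (Fin m × Fin 2)) (hAB : A'.card = B'.card) :
    ∃ g : (Fin m × Fin 2) ⊕ (Fin m × Fin 5) → (Fin m × Fin 2) ⊕ (Fin m × Fin 5),
      Function.Injective g ∧
      (∀ u ∈ (A'.image Sum.inl ∪ (univ.image Sum.inr)),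
        g u ∈ (B'.image Sum.inl ∪ (univ.image Sum.inr)) ∧ 1 ≤ Mblk m σ u (g u)) ∧
      (A'.image Sum.inl ∪ (univ.image Sum.inr)).image g
        = (B'.image Sum.inl ∪ (univ.image Sum.inr)) := by
  classical
  set S : Finset ((Fin m × Fin 2) ⊕ (Fin m × Fin 5)) :=
    A'.image Sum.inl ∪ (univ.image Sum.inr) with hS
  set T : Finset ((Fin m × Fin 2) ⊕ (Fin m × Fin 5)) :=
    B'.image Sum.inl ∪ (univ.image Sum.inr) with hT
  have hA'le : A'.card ≤ 2*m := by
    have := Finset.card_le_univ A'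
    simp only [Finset.card_univ, Fintype.card_prod, Fintype.card_fin] at this
    omega
  have hB'le : B'.card ≤ 2*m := by
    have := Finset.card_le_univ B'
    simp only [Finset.card_univ, Fintype.card_prod, Fintype.card_fin] at this
    omega
  have hdisj : ∀ (C : Finset (Fin m × Fin 2)),
      Disjoint (C.image (Sum.inl : Fin m × Fin 2 → (Fin m × Fin 2) ⊕ (Fin m × Fin 5)))
        ((univ : Finset (Fin m × Fin 5)).image Sum.inr) := by
    intro C
    rw [Finset.disjoint_left]
    intro u hu1 hu2
    rw [Finset.mem_image] at hu1 hu2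
    obtain ⟨p, _, rfl⟩ := hu1
    obtain ⟨q, _, hq⟩ := hu2
    simp at hq
  have hcardgen : ∀ (C : Finset (Fin m × Fin 2)),
      (C.image (Sum.inl : Fin m × Fin 2 → (Fin m × Fin 2) ⊕ (Fin m × Fin 5)) ∪
        (univ : Finset (Fin m × Fin 5)).image Sum.inr).card = C.card + 5*m := by
    intro C
    rw [Finset.card_union_of_disjoint (hdisj C),
      Finset.card_image_of_injective _ Sum.inl_injective,
      Finset.card_image_of_injective _ Sum.inr_injective]
    simp [Finset.card_univ, mul_comm]
  have hST : S.card = T.card := by rw [hS, hT, hcardgen, hcardgen, hAB]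
  have hHallS : ∀ s ⊆ S, s.card ≤
      (s.biUnion (fun u => T.filter (fun v => 1 ≤ Mblk m σ u v))).card := by
    apply dual_hall S T (fun u v => 1 ≤ Mblk m σ u v) hST
    · exact core_left hm hσ A' B' hA'le
    · exact core_right hm hσ A' B' hB'le
  -- Hall's theorem
  set tfun : ((Fin m × Fin 2) ⊕ (Fin m × Fin 5)) →
      Finset ((Fin m × Fin 2) ⊕ (Fin m × Fin 5)) := fun u =>
    if u ∈ S then T.filter (fun v => 1 ≤ Mblk m σ u v) else (univ \ T) with htfun
  have hHall : ∀ s : Finset ((Fin m × Fin 2) ⊕ (Fin m × Fin 5)),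
      s.card ≤ (s.biUnion tfun).card := by
    intro s
    set s1 := s.filter (fun u => u ∈ S) with hs1
    set s2 := s.filter (fun u => u ∉ S) with hs2
    have hsplit : s1.card + s2.card = s.card :=
      Finset.card_filter_add_card_filter_not _
    have hs1S : s1 ⊆ S := fun u hu => (Finset.mem_filter.mp hu).2
    have hsub1 : s1.biUnion (fun u => T.filter (fun v => 1 ≤ Mblk m σ u v))
        ⊆ s.biUnion tfun := by
      intro v hv
      rw [Finset.mem_biUnion] at hv ⊢
      obtain ⟨u, hu, hv⟩ := hv
      refine ⟨u, (Finset.mem_filter.mp hu).1, ?_⟩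
      rw [htfun]
      simp only [(Finset.mem_filter.mp hu).2, if_true]
      exact hv
    by_cases hs2e : s2 = ∅
    · have : s1 = s := by
        rw [hs1]
        rw [Finset.filter_eq_self]
        intro u hu
        by_contra hc
        have : u ∈ s2 := Finset.mem_filter.mpr ⟨hu, hc⟩
        rw [hs2e] at this
        exact absurd this (Finset.notMem_empty u)
      calc s.card = s1.card := by rw [this]
      _ ≤ (s1.biUnion (fun u => T.filter (fun v => 1 ≤ Mblk m σ u v))).card :=
          hHallS s1 hs1S
      _ ≤ (s.biUnion tfun).card := Finset.card_le_card hsub1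
    · obtain ⟨u0, hu0⟩ := Finset.nonempty_iff_ne_empty.mpr hs2e
      have hu0s : u0 ∈ s := (Finset.mem_filter.mp hu0).1
      have hu0S : u0 ∉ S := (Finset.mem_filter.mp hu0).2
      have hsub2 : (univ \ T) ⊆ s.biUnion tfun := by
        intro v hv
        rw [Finset.mem_biUnion]
        refine ⟨u0, hu0s, ?_⟩
        rw [htfun]
        simp only [hu0S, if_false]
        exact hv
      have hsubU : (s1.biUnion (fun u => T.filter (fun v => 1 ≤ Mblk m σ u v)))
          ∪ (univ \ T) ⊆ s.biUnion tfun := Finset.union_subset hsub1 hsub2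
      have hdisj2 : Disjoint
          (s1.biUnion (fun u => T.filter (fun v => 1 ≤ Mblk m σ u v))) (univ \ T) := by
        rw [Finset.disjoint_left]
        intro v hv1 hv2
        rw [Finset.mem_biUnion] at hv1
        obtain ⟨u, _, hv1⟩ := hv1
        exact (Finset.mem_sdiff.mp hv2).2 (Finset.mem_filter.mp hv1).1
      have hscard2 : s2.card ≤ (univ \ T).card := by
        have hsub3 : s2 ⊆ univ \ S := by
          intro u hu
          rw [Finset.mem_sdiff]
          exact ⟨Finset.mem_univ _, (Finset.mem_filter.mp hu).2⟩
        have h4 := Finset.card_le_card hsub3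
        have e1 : (univ \ S).card = Fintype.card ((Fin m × Fin 2) ⊕ (Fin m × Fin 5)) - S.card := by
          rw [Finset.card_sdiff_of_subset (Finset.subset_univ _), Finset.card_univ]
        have e2 : (univ \ T).card = Fintype.card ((Fin m × Fin 2) ⊕ (Fin m × Fin 5)) - T.card := by
          rw [Finset.card_sdiff_of_subset (Finset.subset_univ _), Finset.card_univ]
        have e3 : S.card ≤ Fintype.card ((Fin m × Fin 2) ⊕ (Fin m × Fin 5)) :=
          Finset.card_le_univ _
        omega
      calc s.card = s1.card + s2.card := hsplit.symm
      _ ≤ (s1.biUnion (fun u => T.filter (fun v => 1 ≤ Mblk m σ u v))).card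
          + (univ \ T).card := by
          have := hHallS s1 hs1S
          omega
      _ = ((s1.biUnion (fun u => T.filter (fun v => 1 ≤ Mblk m σ u v))) ∪ (univ \ T)).card :=
          (Finset.card_union_of_disjoint hdisj2).symm
      _ ≤ (s.biUnion tfun).card := Finset.card_le_card hsubU
  obtain ⟨g, hginj, hgmem⟩ := (Finset.all_card_le_biUnion_card_iff_exists_injective tfun).mp hHall
  refine ⟨g, hginj, ?_, ?_⟩
  · intro u hu
    have := hgmem u
    rw [htfun] at this
    simp only [hu, if_true] at this
    exact ⟨(Finset.mem_filter.mp this).1, (Finset.mem_filter.mp this).2⟩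
  · apply Finset.eq_of_subset_of_card_le
    · intro v hv
      rw [Finset.mem_image] at hv
      obtain ⟨u, hu, rfl⟩ := hv
      have := hgmem u
      rw [htfun] at this
      simp only [hu, if_true] at this
      exact (Finset.mem_filter.mp this).1
    · rw [Finset.card_image_of_injective _ hginj, hST]


end St14

/-- For every sufficiently large `m` there is a 103-regular bipartite
multigraph `K` (given by edge multiplicities `M i j` between left vertex `i` and right
vertex `j`), with left part `A₁ ∪ A₂` and right part `B₁ ∪ B₂` where `A₁, B₁` are the
first `2m` vertices and `A₂, B₂` the remaining `5m` vertices, such that for all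
`A₁' ⊆ A₁` and `B₁' ⊆ B₁` with `|A₁'| = |B₁'| ≥ m` there is a perfect matching in `K`
between `A₁' ∪ A₂` and `B₁' ∪ B₂`. -/
theorem statement14 :
    ∃ m₀ : ℕ, ∀ m : ℕ, m₀ ≤ m →
      ∃ M : Fin (7 * m) → Fin (7 * m) → ℕ,
        (∀ i : Fin (7 * m), ∑ j : Fin (7 * m), M i j = 103) ∧
        (∀ j : Fin (7 * m), ∑ i : Fin (7 * m), M i j = 103) ∧
        ∀ A₁' B₁' : Finset (Fin (7 * m)),
          (∀ i ∈ A₁', (i : ℕ) < 2 * m) → (∀ j ∈ B₁', (j : ℕ) < 2 * m) →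
          A₁'.card = B₁'.card → m ≤ A₁'.card →
          ∃ f : Fin (7 * m) → Fin (7 * m),
            Set.BijOn f (↑(A₁' ∪ Finset.univ.filter (fun i => 2 * m ≤ (i : ℕ))))
              (↑(B₁' ∪ Finset.univ.filter (fun j => 2 * m ≤ (j : ℕ)))) ∧
            ∀ i ∈ A₁' ∪ Finset.univ.filter (fun i => 2 * m ≤ (i : ℕ)), 1 ≤ M i (f i) := by
  classical
  refine ⟨1, fun m hm => ?_⟩
  obtain ⟨σ, hσ⟩ := St14.sigma_exists m hm
  set e : ((Fin m × Fin 2) ⊕ (Fin m × Fin 5)) ≃ Fin (7*m) :=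
    (Equiv.sumCongr finProdFinEquiv finProdFinEquiv).trans
      ((finSumFinEquiv).trans (finCongr (by ring))) with he
  have hlt : ∀ p : Fin m × Fin 2, ((e (Sum.inl p)) : ℕ) < 2*m := by
    intro p
    simp [he, finSumFinEquiv]
    omega
  have hge : ∀ q : Fin m × Fin 5, 2*m ≤ ((e (Sum.inr q)) : ℕ) := by
    intro q
    simp [he, finSumFinEquiv]
    omega
  refine ⟨fun i j => St14.Mblk m σ (e.symm i) (e.symm j), ?_, ?_, ?_⟩
  · intro i
    rw [Equiv.sum_comp e.symm (fun v => St14.Mblk m σ (e.symm i) v)]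
    exact St14.Mblk_row m σ _
  · intro j
    rw [Equiv.sum_comp e.symm (fun u => St14.Mblk m σ u (e.symm j))]
    exact St14.Mblk_col m σ _
  · intro A₁' B₁' hA hB hcard _
    set A' : Finset (Fin m × Fin 2) := univ.filter (fun p => e (Sum.inl p) ∈ A₁') with hA'
    set B' : Finset (Fin m × Fin 2) := univ.filter (fun p => e (Sum.inl p) ∈ B₁') with hB'
    have hinj2 : Function.Injective (fun p : Fin m × Fin 2 => e (Sum.inl p)) := by
      intro a b hab
      exact Sum.inl_injective (e.injective hab)
    have himg : ∀ (C' : Finset (Fin m × Fin 2)) (C : Finset (Fin (7*m))),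
        (∀ i ∈ C, (i : ℕ) < 2*m) →
        C' = univ.filter (fun p => e (Sum.inl p) ∈ C) →
        C'.image (fun p => e (Sum.inl p)) = C := by
      intro C' C hC hdef
      ext i
      simp only [hdef, Finset.mem_image, Finset.mem_filter, Finset.mem_univ, true_and]
      constructor
      · rintro ⟨p, hp, rfl⟩
        exact hp
      · intro hi
        have hilt : (i:ℕ) < 2*m := hC i hi
        have hei : e (e.symm i) = i := e.apply_symm_apply i
        cases hv : e.symm i with
        | inl p =>
          have hpe : e (Sum.inl p) = i := by rw [← hv, hei]
          exact ⟨p, by rw [hpe]; exact hi, hpe⟩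
        | inr q =>
          exfalso
          have hqe : e (Sum.inr q) = i := by rw [← hv, hei]
          have := hge q
          rw [hqe] at this
          omega
    have himgA := himg A' A₁' hA hA'
    have himgB := himg B' B₁' hB hB'
    have hcardA : A'.card = A₁'.card := by
      rw [← himgA, Finset.card_image_of_injective _ hinj2]
    have hcardB : B'.card = B₁'.card := by
      rw [← himgB, Finset.card_image_of_injective _ hinj2]
    obtain ⟨g, hginj, hgmem, hgimg⟩ := St14.blk_matching m hm σ hσ A' B' (by omega)
    set S : Finset ((Fin m × Fin 2) ⊕ (Fin m × Fin 5)) :=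
      A'.image Sum.inl ∪ (univ.image Sum.inr) with hS
    set T : Finset ((Fin m × Fin 2) ⊕ (Fin m × Fin 5)) :=
      B'.image Sum.inl ∪ (univ.image Sum.inr) with hT
    set SF := A₁' ∪ univ.filter (fun i : Fin (7*m) => 2*m ≤ (i:ℕ)) with hSF
    set TF := B₁' ∪ univ.filter (fun i : Fin (7*m) => 2*m ≤ (i:ℕ)) with hTF
    have hmemgen : ∀ (C' : Finset (Fin m × Fin 2)) (C : Finset (Fin (7*m))),
        (∀ i ∈ C, (i : ℕ) < 2*m) →
        C' = univ.filter (fun p => e (Sum.inl p) ∈ C) →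
        ∀ u, u ∈ (C'.image Sum.inl ∪ (univ.image Sum.inr) :
          Finset ((Fin m × Fin 2) ⊕ (Fin m × Fin 5))) ↔
          e u ∈ C ∪ univ.filter (fun i : Fin (7*m) => 2*m ≤ (i:ℕ)) := by
      intro C' C hC hdef u
      cases u with
      | inl p =>
        simp only [Finset.mem_union, Finset.mem_image, Finset.mem_filter, Finset.mem_univ,
          true_and, hdef]
        constructor
        · rintro (⟨p', hp', hpp⟩ | ⟨q, hq⟩)
          · left
            have : p' = p := Sum.inl_injective hpp
            rw [← this]
            exact hp'
          · exact absurd hq (by simp)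
        · rintro (h | h)
          · exact Or.inl ⟨p, h, rfl⟩
          · exfalso
            have := hlt p
            omega
      | inr q =>
        simp only [Finset.mem_union, Finset.mem_image, Finset.mem_filter, Finset.mem_univ,
          true_and]
        constructor
        · intro _
          right
          exact hge q
        · intro _
          right
          exact ⟨q, rfl⟩
    have hmemS := hmemgen A' A₁' hA hA'
    have hmemT := hmemgen B' B₁' hB hB'
    refine ⟨fun i => e (g (e.symm i)), ?_, ?_⟩
    · constructor
      · -- MapsTo
        intro i hi
        rw [Finset.mem_coe] at hi ⊢
        have hu : e.symm i ∈ S := by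
          rw [hmemS (e.symm i), e.apply_symm_apply]
          exact hi
        have := (hgmem _ hu).1
        rw [← hTF] at *
        exact (hmemT (g (e.symm i))).mp this
      constructor
      · -- InjOn
        intro a _ b _ hab
        simp only at hab
        have := e.symm.injective (hginj (e.injective hab))
        exact this
      · -- SurjOn
        intro j hj
        rw [Finset.mem_coe] at hj
        have hv : e.symm j ∈ T := by
          rw [hmemT (e.symm j), e.apply_symm_apply]
          exact hj
        rw [← hgimg, Finset.mem_image] at hv
        obtain ⟨u, huS, hgu⟩ := hv
        refine ⟨e u, ?_, ?_⟩
        · exact Finset.mem_coe.mpr ((hmemS u).mp huS)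
        · show e (g (e.symm (e u))) = j
          rw [e.symm_apply_apply, hgu, e.apply_symm_apply]
    · intro i hi
      have hu : e.symm i ∈ S := by
        rw [hmemS (e.symm i), e.apply_symm_apply]
        exact hi
      have h2 := (hgmem _ hu).2
      show 1 ≤ St14.Mblk m σ (e.symm i) (e.symm (e (g (e.symm i))))
      rw [e.symm_apply_apply]
      exact h2
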